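/- Let d ≥ 3. For each x ∈ ℝ^d let c(x) be a real symmetric positive semidefinite d×d matrix and let ν(x,·) be a Borel measure on ℝ^d with ν(x,{0}) = 0 and sup_{x∈ℝ^d} ∫_{ℝ^d} min{1, |y|²} ν(x,dy) < ∞ and sup_{x∈ℝ^d} max_{i,j} |c_{ij}(x)| < ∞. Define Re q(x,ξ) := (1/2)⟨ξ, c(x)ξ⟩ + ∫_{ℝ^d} (1 − cos⟨ξ,y⟩) ν(x,dy), and assume ξ ↦ inf_{x∈ℝ^d} Re q(x,ξ) is Borel measurable. If liminf_{|ξ|→0} ( sup_{t>0} inf_{x∈ℝ^d} ( ⟨ξ, c(x)ξ⟩ + ∫_{{|y|≤t}} ⟨ξ,y⟩² ν(x,dy) ) ) / |ξ|² > 0, then ∫_{{|ξ|<r}} dξ / inf_{x∈ℝ^d} Re q(x,ξ) < ∞ for all sufficiently small r > 0. -/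

import Mathlib

open MeasureTheory Filter Topology
open scoped ENNReal

/-- The real part of a symbol with Lévy triplet `(b(x), c(x), ν(x,dy))`:
`Re q(x,ξ) = (1/2)⟨ξ, c(x)ξ⟩ + ∫ (1 − cos⟨ξ,y⟩) ν(x,dy)`, valued in `[0,∞]`. -/
noncomputable def reSymbol (d : ℕ)
    (c : EuclideanSpace ℝ (Fin d) → Matrix (Fin d) (Fin d) ℝ)
    (ν : EuclideanSpace ℝ (Fin d) → MeasureTheory.Measure (EuclideanSpace ℝ (Fin d)))
    (x ξ : EuclideanSpace ℝ (Fin d)) : ℝ≥0∞ :=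
  ENNReal.ofReal ((1 / 2) * ∑ i, ∑ j, ξ i * c x i j * ξ j) +
    ∫⁻ y, ENNReal.ofReal (1 - Real.cos ((inner ℝ ξ y : ℝ))) ∂(ν x)

namespace Stmt4Aux

variable {d : ℕ}

/-- The truncated quadratic functional. -/
noncomputable def Fq (d : ℕ)
    (c : EuclideanSpace ℝ (Fin d) → Matrix (Fin d) (Fin d) ℝ)
    (ν : EuclideanSpace ℝ (Fin d) → Measure (EuclideanSpace ℝ (Fin d)))
    (t : ℝ) (x ξ : EuclideanSpace ℝ (Fin d)) : ℝ≥0∞ :=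
  ENNReal.ofReal (∑ i, ∑ j, ξ i * c x i j * ξ j) +
    ∫⁻ y in {y : EuclideanSpace ℝ (Fin d) | ‖y‖ ≤ t},
      ENNReal.ofReal ((inner ℝ ξ y : ℝ) ^ 2) ∂(ν x)

lemma coord_abs_le_norm (ξ : EuclideanSpace ℝ (Fin d)) (i : Fin d) : |ξ i| ≤ ‖ξ‖ := by
  rw [EuclideanSpace.norm_eq]
  calc |ξ i| = Real.sqrt (‖ξ i‖ ^ 2) := by
        rw [Real.norm_eq_abs, sq_abs, Real.sqrt_sq_eq_abs]
    _ ≤ _ := Real.sqrt_le_sqrt (Finset.single_le_sum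
        (f := fun j => ‖ξ j‖ ^ 2) (fun j _ => sq_nonneg _) (Finset.mem_univ i))

lemma cos_key {u : ℝ} (hu : |u| ≤ 1) : u ^ 2 ≤ 3 * (1 - Real.cos u) := by
  have h := Real.cos_bound hu
  have h4 : |u| ^ 4 = u ^ 4 := by
    rw [← abs_pow]; exact abs_of_nonneg (by positivity)
  rw [h4] at h
  have h2 : u ^ 2 ≤ 1 := by
    have := sq_abs u
    nlinarith [abs_nonneg u]
  have h5 : u ^ 4 ≤ u ^ 2 := by nlinarith [sq_nonneg u]
  have h6 : Real.cos u - (1 - u ^ 2 / 2) ≤ u ^ 4 * (5 / 96) := (abs_le.1 h).2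
  nlinarith

lemma meas_inner_sq (ξ : EuclideanSpace ℝ (Fin d)) :
    Measurable fun y : EuclideanSpace ℝ (Fin d) => ENNReal.ofReal ((inner ℝ ξ y : ℝ) ^ 2) :=
  (((continuous_const.inner (𝕜 := ℝ) continuous_id).pow 2).measurable).ennreal_ofReal

lemma meas_min : Measurable fun y : EuclideanSpace ℝ (Fin d) =>
    ENNReal.ofReal (min 1 (‖y‖ ^ 2)) :=
  ((continuous_const.min (continuous_norm.pow 2)).measurable).ennreal_ofReal

lemma Q_nonneg (c : EuclideanSpace ℝ (Fin d) → Matrix (Fin d) (Fin d) ℝ)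
    (hc : ∀ x, (c x).PosSemidef) (x ξ : EuclideanSpace ℝ (Fin d)) :
    0 ≤ ∑ i, ∑ j, ξ i * c x i j * ξ j := by
  have h2 := (hc x).dotProduct_mulVec_nonneg (fun i => ξ i)
  simpa [dotProduct, Matrix.mulVec, Finset.mul_sum, mul_assoc] using h2

/-- Key comparison: the truncated form is dominated by `3 Re q` when `t‖ξ‖ ≤ 1`. -/
lemma Fq_le_three (c : EuclideanSpace ℝ (Fin d) → Matrix (Fin d) (Fin d) ℝ)
    (hc : ∀ x, (c x).PosSemidef)
    (ν : EuclideanSpace ℝ (Fin d) → Measure (EuclideanSpace ℝ (Fin d)))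
    {t : ℝ} (x : EuclideanSpace ℝ (Fin d)) {ξ : EuclideanSpace ℝ (Fin d)}
    (hξt : t * ‖ξ‖ ≤ 1) :
    Fq d c ν t x ξ ≤ 3 * reSymbol d c ν x ξ := by
  rw [Fq, reSymbol, mul_add]
  refine add_le_add ?_ ?_
  · rw [show ((3 : ℝ≥0∞)) = ENNReal.ofReal 3 by simp,
      ← ENNReal.ofReal_mul (by norm_num)]
    exact ENNReal.ofReal_le_ofReal (by nlinarith [Q_nonneg c hc x ξ])
  · have hpt : ∀ y ∈ {y : EuclideanSpace ℝ (Fin d) | ‖y‖ ≤ t},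
        ENNReal.ofReal ((inner ℝ ξ y : ℝ) ^ 2) ≤
          ENNReal.ofReal 3 * ENNReal.ofReal (1 - Real.cos ((inner ℝ ξ y : ℝ))) := by
      intro y hy
      have habs : |(inner ℝ ξ y : ℝ)| ≤ 1 := by
        have h1 : |(inner ℝ ξ y : ℝ)| ≤ ‖ξ‖ * ‖y‖ := abs_real_inner_le_norm ξ y
        have h2 : ‖ξ‖ * ‖y‖ ≤ ‖ξ‖ * t := by
          exact mul_le_mul_of_nonneg_left hy (norm_nonneg _)
        nlinarith [norm_nonneg ξ]
      rw [← ENNReal.ofReal_mul (by norm_num)]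
      exact ENNReal.ofReal_le_ofReal (cos_key habs)
    calc ∫⁻ y in {y : EuclideanSpace ℝ (Fin d) | ‖y‖ ≤ t},
          ENNReal.ofReal ((inner ℝ ξ y : ℝ) ^ 2) ∂(ν x)
        ≤ ∫⁻ y in {y : EuclideanSpace ℝ (Fin d) | ‖y‖ ≤ t},
            ENNReal.ofReal 3 * ENNReal.ofReal (1 - Real.cos ((inner ℝ ξ y : ℝ))) ∂(ν x) := by
          refine setLIntegral_mono ?_ hpt
          exact (measurable_const.mul
            ((continuous_const.sub (Real.continuous_cos.comp (continuous_const.inner (𝕜 := ℝ) continuous_id))).measurable.ennreal_ofReal))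
      _ = ENNReal.ofReal 3 * ∫⁻ y in {y : EuclideanSpace ℝ (Fin d) | ‖y‖ ≤ t},
            ENNReal.ofReal (1 - Real.cos ((inner ℝ ξ y : ℝ))) ∂(ν x) :=
          lintegral_const_mul' _ _ ENNReal.ofReal_ne_top
      _ ≤ 3 * ∫⁻ y, ENNReal.ofReal (1 - Real.cos ((inner ℝ ξ y : ℝ))) ∂(ν x) := by
          rw [show ((3 : ℝ≥0∞)) = ENNReal.ofReal 3 by simp]
          exact mul_le_mul_right (setLIntegral_le_lintegral _ _) _

/-- Homogeneity in `ξ`. -/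
lemma Fq_smul (c : EuclideanSpace ℝ (Fin d) → Matrix (Fin d) (Fin d) ℝ)
    (ν : EuclideanSpace ℝ (Fin d) → Measure (EuclideanSpace ℝ (Fin d)))
    (t : ℝ) (x ξ : EuclideanSpace ℝ (Fin d)) {s : ℝ} (hs : 0 ≤ s) :
    Fq d c ν t x (s • ξ) = ENNReal.ofReal (s ^ 2) * Fq d c ν t x ξ := by
  rw [Fq, Fq, mul_add]
  congr 1
  · rw [← ENNReal.ofReal_mul (sq_nonneg s)]
    congr 1
    rw [Finset.mul_sum]
    refine Finset.sum_congr rfl fun i _ => ?_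
    rw [Finset.mul_sum]
    refine Finset.sum_congr rfl fun j _ => ?_
    simp only [PiLp.smul_apply, smul_eq_mul]
    ring
  · simp_rw [real_inner_smul_left, mul_pow, ENNReal.ofReal_mul (sq_nonneg s)]
    exact lintegral_const_mul' _ _ ENNReal.ofReal_ne_top

/-- Monotonicity in `t`. -/
lemma Fq_mono (c : EuclideanSpace ℝ (Fin d) → Matrix (Fin d) (Fin d) ℝ)
    (ν : EuclideanSpace ℝ (Fin d) → Measure (EuclideanSpace ℝ (Fin d)))
    {t t' : ℝ} (h : t ≤ t') (x ξ : EuclideanSpace ℝ (Fin d)) :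
    Fq d c ν t x ξ ≤ Fq d c ν t' x ξ := by
  refine add_le_add_right (lintegral_mono_set fun y hy => ?_) _
  exact le_trans hy h

/-- Sup bound : finiteness. -/
lemma Fq_le_bound (c : EuclideanSpace ℝ (Fin d) → Matrix (Fin d) (Fin d) ℝ)
    (ν : EuclideanSpace ℝ (Fin d) → Measure (EuclideanSpace ℝ (Fin d)))
    {t : ℝ} (ht : 1 ≤ t) (x ξ : EuclideanSpace ℝ (Fin d)) :
    Fq d c ν t x ξ ≤ ENNReal.ofReal (∑ i, ∑ j, ξ i * c x i j * ξ j) +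
      ENNReal.ofReal (‖ξ‖ ^ 2 * t ^ 2) *
        ∫⁻ y, ENNReal.ofReal (min 1 (‖y‖ ^ 2)) ∂(ν x) := by
  refine add_le_add_right ?_ _
  calc ∫⁻ y in {y : EuclideanSpace ℝ (Fin d) | ‖y‖ ≤ t},
        ENNReal.ofReal ((inner ℝ ξ y : ℝ) ^ 2) ∂(ν x)
      ≤ ∫⁻ y in {y : EuclideanSpace ℝ (Fin d) | ‖y‖ ≤ t},
          ENNReal.ofReal (‖ξ‖ ^ 2 * t ^ 2) * ENNReal.ofReal (min 1 (‖y‖ ^ 2)) ∂(ν x) := by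
        refine setLIntegral_mono (measurable_const.mul meas_min) fun y hy => ?_
        rw [← ENNReal.ofReal_mul (by positivity)]
        refine ENNReal.ofReal_le_ofReal ?_
        have h1 : (inner ℝ ξ y : ℝ) ^ 2 ≤ ‖ξ‖ ^ 2 * ‖y‖ ^ 2 := by
          have := abs_real_inner_le_norm ξ y
          nlinarith [abs_nonneg (inner ℝ ξ y : ℝ), sq_abs (inner ℝ ξ y : ℝ),
            mul_nonneg (norm_nonneg ξ) (norm_nonneg y)]
        have h2 : ‖y‖ ^ 2 ≤ t ^ 2 * min 1 (‖y‖ ^ 2) := by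
          rcases le_total (‖y‖ ^ 2) 1 with h | h
          · rw [min_eq_right h]; nlinarith [sq_nonneg ‖y‖, sq_nonneg (t - 1)]
          · rw [min_eq_left h]
            have : ‖y‖ ≤ t := hy
            nlinarith [norm_nonneg y]
        nlinarith [sq_nonneg ‖ξ‖, sq_nonneg t, mul_nonneg (sq_nonneg ‖ξ‖) (sq_nonneg ‖y‖)]
    _ = ENNReal.ofReal (‖ξ‖ ^ 2 * t ^ 2) * ∫⁻ y in {y : EuclideanSpace ℝ (Fin d) | ‖y‖ ≤ t},
          ENNReal.ofReal (min 1 (‖y‖ ^ 2)) ∂(ν x) :=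
        lintegral_const_mul' _ _ ENNReal.ofReal_ne_top
    _ ≤ _ := mul_le_mul_right (setLIntegral_le_lintegral _ _) _

/-- Lipschitz-type estimate. -/
lemma Fq_lip (c : EuclideanSpace ℝ (Fin d) → Matrix (Fin d) (Fin d) ℝ)
    (ν : EuclideanSpace ℝ (Fin d) → Measure (EuclideanSpace ℝ (Fin d)))
    {K : ℝ} (hK : ∀ x i j, |c x i j| ≤ K) (hK0 : 0 ≤ K)
    {t R : ℝ} (ht : 1 ≤ t) (hR : 0 ≤ R) (x : EuclideanSpace ℝ (Fin d))
    {ξ ξ' : EuclideanSpace ℝ (Fin d)} (hξ : ‖ξ‖ ≤ R) (hξ' : ‖ξ'‖ ≤ R) :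
    Fq d c ν t x ξ ≤ Fq d c ν t x ξ' + ENNReal.ofReal ‖ξ - ξ'‖ *
      (ENNReal.ofReal ((d : ℝ) * d * (2 * K * R)) +
        ENNReal.ofReal (2 * R * t ^ 2) * ∫⁻ y, ENNReal.ofReal (min 1 (‖y‖ ^ 2)) ∂(ν x)) := by
  have hco : ∀ i, |ξ i - ξ' i| ≤ ‖ξ - ξ'‖ := by
    intro i
    have := coord_abs_le_norm (ξ - ξ') i
    simpa using this
  -- matrix part
  have hQ : (∑ i, ∑ j, ξ i * c x i j * ξ j) ≤
      (∑ i, ∑ j, ξ' i * c x i j * ξ' j) + ‖ξ - ξ'‖ * ((d : ℝ) * d * (2 * K * R)) := by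
    have hterm : ∀ i j, ξ i * c x i j * ξ j ≤ ξ' i * c x i j * ξ' j + 2 * K * R * ‖ξ - ξ'‖ := by
      intro i j
      have h1 : ξ i * c x i j * ξ j - ξ' i * c x i j * ξ' j
          = c x i j * (ξ i * (ξ j - ξ' j)) + c x i j * ((ξ i - ξ' i) * ξ' j) := by ring
      have h2 : ξ i * c x i j * ξ j - ξ' i * c x i j * ξ' j ≤
          |c x i j * (ξ i * (ξ j - ξ' j))| + |c x i j * ((ξ i - ξ' i) * ξ' j)| := by
        rw [h1]; exact le_trans (le_abs_self _) (abs_add_le _ _)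
      have h3 : |c x i j * (ξ i * (ξ j - ξ' j))| ≤ K * (R * ‖ξ - ξ'‖) := by
        rw [abs_mul, abs_mul]
        refine mul_le_mul (hK x i j) (mul_le_mul ?_ (hco j) (abs_nonneg _) hR)
          (by positivity) hK0
        exact le_trans (coord_abs_le_norm ξ i) hξ
      have h4 : |c x i j * ((ξ i - ξ' i) * ξ' j)| ≤ K * (‖ξ - ξ'‖ * R) := by
        rw [abs_mul, abs_mul]
        refine mul_le_mul (hK x i j) (mul_le_mul (hco i) ?_ (abs_nonneg _)
          (norm_nonneg _)) (by positivity) hK0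
        exact le_trans (coord_abs_le_norm ξ' j) hξ'
      nlinarith
    calc (∑ i, ∑ j, ξ i * c x i j * ξ j)
        ≤ ∑ i, ∑ j, (ξ' i * c x i j * ξ' j + 2 * K * R * ‖ξ - ξ'‖) :=
          Finset.sum_le_sum fun i _ => Finset.sum_le_sum fun j _ => hterm i j
      _ = (∑ i, ∑ j, ξ' i * c x i j * ξ' j) + (d : ℝ) * d * (2 * K * R * ‖ξ - ξ'‖) := by
          simp [Finset.sum_add_distrib, Finset.sum_const, Finset.card_univ, mul_comm,
            mul_assoc, mul_left_comm]
      _ = _ := by ring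
  have hQ' : ENNReal.ofReal (∑ i, ∑ j, ξ i * c x i j * ξ j) ≤
      ENNReal.ofReal (∑ i, ∑ j, ξ' i * c x i j * ξ' j) +
        ENNReal.ofReal ‖ξ - ξ'‖ * ENNReal.ofReal ((d : ℝ) * d * (2 * K * R)) := by
    refine le_trans (ENNReal.ofReal_le_ofReal hQ) ?_
    refine le_trans (ENNReal.ofReal_add_le) ?_
    rw [ENNReal.ofReal_mul (norm_nonneg _)]
  -- integral part
  have hI : (∫⁻ y in {y : EuclideanSpace ℝ (Fin d) | ‖y‖ ≤ t},
        ENNReal.ofReal ((inner ℝ ξ y : ℝ) ^ 2) ∂(ν x)) ≤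
      (∫⁻ y in {y : EuclideanSpace ℝ (Fin d) | ‖y‖ ≤ t},
        ENNReal.ofReal ((inner ℝ ξ' y : ℝ) ^ 2) ∂(ν x)) +
        ENNReal.ofReal ‖ξ - ξ'‖ * (ENNReal.ofReal (2 * R * t ^ 2) *
          ∫⁻ y, ENNReal.ofReal (min 1 (‖y‖ ^ 2)) ∂(ν x)) := by
    have hpt : ∀ y ∈ {y : EuclideanSpace ℝ (Fin d) | ‖y‖ ≤ t},
        ENNReal.ofReal ((inner ℝ ξ y : ℝ) ^ 2) ≤
          ENNReal.ofReal ((inner ℝ ξ' y : ℝ) ^ 2) +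
            ENNReal.ofReal (‖ξ - ξ'‖ * (2 * R * t ^ 2)) * ENNReal.ofReal (min 1 (‖y‖ ^ 2)) := by
      intro y hy
      have hreal : (inner ℝ ξ y : ℝ) ^ 2 ≤ (inner ℝ ξ' y : ℝ) ^ 2 +
          ‖ξ - ξ'‖ * (2 * R * t ^ 2) * min 1 (‖y‖ ^ 2) := by
        have hpq : (inner ℝ ξ y : ℝ) ^ 2 - (inner ℝ ξ' y : ℝ) ^ 2
            = (inner ℝ (ξ + ξ') y : ℝ) * (inner ℝ (ξ - ξ') y : ℝ) := by
          rw [inner_add_left, inner_sub_left]; ring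
        have ha : |(inner ℝ (ξ + ξ') y : ℝ)| ≤ 2 * R * ‖y‖ := by
          refine le_trans (abs_real_inner_le_norm _ _) ?_
          have : ‖ξ + ξ'‖ ≤ 2 * R := le_trans (norm_add_le _ _) (by linarith)
          exact mul_le_mul_of_nonneg_right this (norm_nonneg _) |>.trans_eq rfl
        have hb : |(inner ℝ (ξ - ξ') y : ℝ)| ≤ ‖ξ - ξ'‖ * ‖y‖ := abs_real_inner_le_norm _ _
        have hprod : (inner ℝ (ξ + ξ') y : ℝ) * (inner ℝ (ξ - ξ') y : ℝ) ≤
            (2 * R * ‖y‖) * (‖ξ - ξ'‖ * ‖y‖) := by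
          calc (inner ℝ (ξ + ξ') y : ℝ) * (inner ℝ (ξ - ξ') y : ℝ)
              ≤ |(inner ℝ (ξ + ξ') y : ℝ) * (inner ℝ (ξ - ξ') y : ℝ)| := le_abs_self _
            _ = |(inner ℝ (ξ + ξ') y : ℝ)| * |(inner ℝ (ξ - ξ') y : ℝ)| := abs_mul _ _
            _ ≤ (2 * R * ‖y‖) * (‖ξ - ξ'‖ * ‖y‖) :=
                mul_le_mul ha hb (abs_nonneg _) (by positivity)
        have h2 : ‖y‖ ^ 2 ≤ t ^ 2 * min 1 (‖y‖ ^ 2) := by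
          rcases le_total (‖y‖ ^ 2) 1 with h | h
          · rw [min_eq_right h]; nlinarith [sq_nonneg ‖y‖, sq_nonneg (t - 1)]
          · rw [min_eq_left h]
            have hyt : ‖y‖ ≤ t := hy
            nlinarith [norm_nonneg y]
        have hnn : (0:ℝ) ≤ 2 * R * ‖ξ - ξ'‖ := by positivity
        nlinarith [mul_le_mul_of_nonneg_left h2 hnn]
      refine le_trans (ENNReal.ofReal_le_ofReal hreal) ?_
      refine le_trans (ENNReal.ofReal_add_le) ?_
      rw [ENNReal.ofReal_mul (by positivity : (0:ℝ) ≤ ‖ξ - ξ'‖ * (2 * R * t ^ 2))]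
    calc (∫⁻ y in {y : EuclideanSpace ℝ (Fin d) | ‖y‖ ≤ t},
          ENNReal.ofReal ((inner ℝ ξ y : ℝ) ^ 2) ∂(ν x))
        ≤ ∫⁻ y in {y : EuclideanSpace ℝ (Fin d) | ‖y‖ ≤ t},
            (ENNReal.ofReal ((inner ℝ ξ' y : ℝ) ^ 2) +
              ENNReal.ofReal (‖ξ - ξ'‖ * (2 * R * t ^ 2)) *
                ENNReal.ofReal (min 1 (‖y‖ ^ 2))) ∂(ν x) :=
          setLIntegral_mono ((meas_inner_sq ξ').add (measurable_const.mul meas_min)) hpt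
      _ = (∫⁻ y in {y : EuclideanSpace ℝ (Fin d) | ‖y‖ ≤ t},
            ENNReal.ofReal ((inner ℝ ξ' y : ℝ) ^ 2) ∂(ν x)) +
            ENNReal.ofReal (‖ξ - ξ'‖ * (2 * R * t ^ 2)) *
              ∫⁻ y in {y : EuclideanSpace ℝ (Fin d) | ‖y‖ ≤ t},
                ENNReal.ofReal (min 1 (‖y‖ ^ 2)) ∂(ν x) := by
          rw [lintegral_add_left (meas_inner_sq ξ'), lintegral_const_mul' _ _ ENNReal.ofReal_ne_top]
      _ ≤ _ := by
          rw [ENNReal.ofReal_mul (norm_nonneg _), mul_assoc]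
          exact add_le_add_right (mul_le_mul_right (mul_le_mul_right
            (setLIntegral_le_lintegral _ _) _) _) _
  calc Fq d c ν t x ξ ≤ (ENNReal.ofReal (∑ i, ∑ j, ξ' i * c x i j * ξ' j) +
        ENNReal.ofReal ‖ξ - ξ'‖ * ENNReal.ofReal ((d : ℝ) * d * (2 * K * R))) +
        ((∫⁻ y in {y : EuclideanSpace ℝ (Fin d) | ‖y‖ ≤ t},
          ENNReal.ofReal ((inner ℝ ξ' y : ℝ) ^ 2) ∂(ν x)) +
          ENNReal.ofReal ‖ξ - ξ'‖ * (ENNReal.ofReal (2 * R * t ^ 2) *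
            ∫⁻ y, ENNReal.ofReal (min 1 (‖y‖ ^ 2)) ∂(ν x))) := add_le_add hQ' hI
    _ = _ := by rw [Fq, mul_add]; ring

lemma isOpen_slice (c : EuclideanSpace ℝ (Fin d) → Matrix (Fin d) (Fin d) ℝ)
    (ν : EuclideanSpace ℝ (Fin d) → Measure (EuclideanSpace ℝ (Fin d))) {K : ℝ}
    (hK : ∀ x i j, |c x i j| ≤ K) (hK0 : 0 ≤ K)
    (hM : (⨆ x, ∫⁻ y, ENNReal.ofReal (min 1 (‖y‖ ^ 2)) ∂(ν x)) < ∞)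
    {t R : ℝ} (ht : 1 ≤ t) (hR : 0 < R) {a : ℝ≥0∞} (ha : a ≠ ∞) :
    IsOpen {ξ : EuclideanSpace ℝ (Fin d) |
      ξ ∈ Metric.ball (0 : EuclideanSpace ℝ (Fin d)) R ∧ a < ⨅ x, Fq d c ν t x ξ} := by
  set M := ⨆ x, ∫⁻ y, ENNReal.ofReal (min 1 (‖y‖ ^ 2)) ∂(ν x) with hMdef
  set Cbig := ENNReal.ofReal ((d : ℝ) * d * (2 * K * R)) + ENNReal.ofReal (2 * R * t ^ 2) * M
    with hCdef
  have hCtop : Cbig ≠ ∞ :=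
    ENNReal.add_ne_top.2 ⟨ENNReal.ofReal_ne_top,
      ENNReal.mul_ne_top ENNReal.ofReal_ne_top hM.ne⟩
  rw [Metric.isOpen_iff]
  rintro ξ₀ ⟨hb, hlt⟩
  rw [mem_ball_zero_iff] at hb
  have hfin : (⨅ x, Fq d c ν t x ξ₀) ≠ ∞ := by
    refine ne_of_lt (lt_of_le_of_lt (iInf_le _ (0 : EuclideanSpace ℝ (Fin d)))
      (lt_of_le_of_lt (Fq_le_bound c ν ht (0 : EuclideanSpace ℝ (Fin d)) ξ₀) ?_))
    refine ENNReal.add_lt_top.2 ⟨ENNReal.ofReal_lt_top, ?_⟩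
    exact ENNReal.mul_lt_top ENNReal.ofReal_lt_top
      (lt_of_le_of_lt (le_iSup (fun x => ∫⁻ y, ENNReal.ofReal (min 1 (‖y‖ ^ 2)) ∂(ν x)) _) hM)
  set γ := (⨅ x, Fq d c ν t x ξ₀) - a with hγdef
  have hγ0 : 0 < γ := tsub_pos_of_lt hlt
  have hγtop : γ ≠ ∞ := by
    refine ne_of_lt (lt_of_le_of_lt tsub_le_self ?_)
    exact lt_top_iff_ne_top.2 hfin
  have hγt0 : 0 < γ.toReal := ENNReal.toReal_pos hγ0.ne' hγtop
  set r' := min (R - ‖ξ₀‖) (γ.toReal / (Cbig.toReal + 1)) with hr'def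
  have hr'0 : 0 < r' := by
    refine lt_min (by linarith) ?_
    have : (0:ℝ) ≤ Cbig.toReal := ENNReal.toReal_nonneg
    positivity
  refine ⟨r', hr'0, fun ξ' hξ' => ?_⟩
  rw [Metric.mem_ball, dist_eq_norm] at hξ'
  have hnorm' : ‖ξ'‖ < R := by
    have h1 : ‖ξ'‖ ≤ ‖ξ₀‖ + ‖ξ' - ξ₀‖ := by
      calc ‖ξ'‖ = ‖ξ₀ + (ξ' - ξ₀)‖ := by rw [add_sub_cancel]
        _ ≤ _ := norm_add_le _ _
    have h2 : ‖ξ' - ξ₀‖ < R - ‖ξ₀‖ := lt_of_lt_of_le hξ' (min_le_left _ _)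
    linarith
  refine ⟨mem_ball_zero_iff.2 hnorm', ?_⟩
  by_cases hfin' : (⨅ x, Fq d c ν t x ξ') = ∞
  · rw [hfin']; exact ha.lt_top
  have hlip : (⨅ x, Fq d c ν t x ξ₀) ≤ (⨅ x, Fq d c ν t x ξ') +
      ENNReal.ofReal ‖ξ₀ - ξ'‖ * Cbig := by
    rw [← tsub_le_iff_right]
    refine le_iInf fun x => ?_
    rw [tsub_le_iff_right]
    refine le_trans (iInf_le _ x) (le_trans
      (Fq_lip c ν hK hK0 ht hR.le x hb.le hnorm'.le) ?_)
    refine add_le_add_right (mul_le_mul_right (add_le_add_right (mul_le_mul_right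
      (le_iSup (fun x => ∫⁻ y, ENNReal.ofReal (min 1 (‖y‖ ^ 2)) ∂(ν x)) x) _) _) _) _
  have hsm : ENNReal.ofReal ‖ξ₀ - ξ'‖ * Cbig < γ := by
    have hnr : ‖ξ₀ - ξ'‖ ≤ γ.toReal / (Cbig.toReal + 1) := by
      rw [norm_sub_rev]
      exact le_of_lt (lt_of_lt_of_le hξ' (min_le_right _ _))
    calc ENNReal.ofReal ‖ξ₀ - ξ'‖ * Cbig
        ≤ ENNReal.ofReal (γ.toReal / (Cbig.toReal + 1)) * ENNReal.ofReal Cbig.toReal := by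
          rw [ENNReal.ofReal_toReal hCtop]
          exact mul_le_mul_left (ENNReal.ofReal_le_ofReal hnr) _
      _ = ENNReal.ofReal (γ.toReal / (Cbig.toReal + 1) * Cbig.toReal) :=
          (ENNReal.ofReal_mul (by positivity)).symm
      _ < ENNReal.ofReal γ.toReal := by
          rw [ENNReal.ofReal_lt_ofReal_iff hγt0]
          rw [div_mul_eq_mul_div, div_lt_iff₀ (by positivity)]
          nlinarith [ENNReal.toReal_nonneg (a := Cbig)]
      _ = γ := ENNReal.ofReal_toReal hγtop
  have hchain : a + γ < (⨅ x, Fq d c ν t x ξ') + γ := by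
    calc a + γ = ⨅ x, Fq d c ν t x ξ₀ := add_tsub_cancel_of_le hlt.le
      _ ≤ (⨅ x, Fq d c ν t x ξ') + ENNReal.ofReal ‖ξ₀ - ξ'‖ * Cbig := hlip
      _ < _ := ENNReal.add_lt_add_left hfin' hsm
  exact (ENNReal.add_lt_add_iff_right hγtop).1 hchain

lemma nontrivial_E (hd : 3 ≤ d) : Nontrivial (EuclideanSpace ℝ (Fin d)) := by
  refine nontrivial_of_ne (EuclideanSpace.single ⟨0, by omega⟩ (1:ℝ)) 0 ?_
  intro h
  have := congrArg (fun v : EuclideanSpace ℝ (Fin d) => v ⟨0, by omega⟩) h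
  simp [EuclideanSpace.single_apply] at this

lemma lint_inv_sq_lt_top (hd : 3 ≤ d) {r : ℝ} (hr : 0 < r) :
    ∫⁻ ξ in Metric.ball (0 : EuclideanSpace ℝ (Fin d)) r,
      (ENNReal.ofReal (‖ξ‖ ^ 2))⁻¹ < ∞ := by
  haveI := nontrivial_E hd
  set E := EuclideanSpace ℝ (Fin d)
  set f : E → ℝ≥0∞ := fun ξ => (ENNReal.ofReal (‖ξ‖ ^ 2))⁻¹ with hfdef
  set A : ℕ → Set E := fun n => {ξ : E | r / 2 ^ (n + 1) ≤ ‖ξ‖ ∧ ‖ξ‖ < r / 2 ^ n} with hAdef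
  have hsub : Metric.ball (0 : E) r ⊆ (⋃ n, A n) ∪ {0} := by
    intro ξ hξ
    rw [mem_ball_zero_iff] at hξ
    rcases eq_or_ne ξ 0 with h0 | h0
    · exact Set.mem_union_right _ (by simp [h0])
    · have hpos : 0 < ‖ξ‖ := norm_pos_iff.2 h0
      have hex : ∃ n : ℕ, r / 2 ^ (n + 1) ≤ ‖ξ‖ := by
        obtain ⟨n, hn⟩ := exists_pow_lt_of_lt_one (div_pos hpos hr) (by norm_num : (1:ℝ)/2 < 1)
        refine ⟨n, ?_⟩
        have h2 : ((1:ℝ)/2) ^ n = 1 / 2 ^ n := by rw [div_pow, one_pow]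
        rw [h2, div_lt_div_iff₀ (by positivity) hr] at hn
        rw [div_le_iff₀ (by positivity)]
        have hle : (2:ℝ) ^ n ≤ 2 ^ (n+1) := by
          apply pow_le_pow_right₀ (by norm_num) (by omega)
        nlinarith [pow_pos (show (0:ℝ) < 2 by norm_num) n]
      set n₀ := Nat.find hex with hn₀
      have h1 : r / 2 ^ (n₀ + 1) ≤ ‖ξ‖ := Nat.find_spec hex
      have h2 : ‖ξ‖ < r / 2 ^ n₀ := by
        rcases Nat.eq_zero_or_pos n₀ with h | h
        · rw [h]; simpa using hξ
        · have := Nat.find_min hex (m := n₀ - 1) (by omega)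
          push_neg at this
          have heq : n₀ - 1 + 1 = n₀ := by omega
          rwa [heq] at this
      exact Set.mem_union_left _ (Set.mem_iUnion.2 ⟨n₀, h1, h2⟩)
  have hB : (volume (Metric.ball (0:E) 1)) < ∞ := measure_ball_lt_top
  set B := volume (Metric.ball (0:E) 1) with hBdef
  have hbound : ∀ n : ℕ, (∫⁻ ξ in A n, f ξ) ≤
      ENNReal.ofReal (4 * r ^ d / r ^ 2) * B * ENNReal.ofReal ((1:ℝ)/2) ^ n := by
    intro n
    have hstep1 : (∫⁻ ξ in A n, f ξ) ≤
        (ENNReal.ofReal ((r / 2 ^ (n+1)) ^ 2))⁻¹ * volume (A n) := by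
      rw [← setLIntegral_const]
      refine setLIntegral_mono measurable_const fun ξ hξ => ?_
      exact ENNReal.inv_le_inv' (ENNReal.ofReal_le_ofReal (by
        have := hξ.1
        have h0 : (0:ℝ) ≤ r / 2 ^ (n+1) := by positivity
        nlinarith))
    have hstep2 : volume (A n) ≤ ENNReal.ofReal ((r / 2 ^ n) ^ d) * B := by
      have hb2 := MeasureTheory.Measure.addHaar_ball (volume : Measure E) 0
        (by positivity : (0:ℝ) ≤ r / 2 ^ n)
      rw [show Module.finrank ℝ E = d from finrank_euclideanSpace_fin] at hb2
      calc volume (A n) ≤ volume (Metric.ball (0:E) (r / 2 ^ n)) :=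
            measure_mono fun ξ hξ => mem_ball_zero_iff.2 hξ.2
        _ = _ := hb2
    have hinv : (ENNReal.ofReal ((r / 2 ^ (n+1)) ^ 2))⁻¹ =
        ENNReal.ofReal (((r / 2 ^ (n+1)) ^ 2)⁻¹) :=
      (ENNReal.ofReal_inv_of_pos (by positivity)).symm
    have hreal : ((r / 2 ^ (n+1)) ^ 2)⁻¹ * (r / 2 ^ n) ^ d ≤
        (4 * r ^ d / r ^ 2) * ((1:ℝ)/2) ^ n := by
      rw [div_pow, div_pow, inv_div, div_pow, one_pow]
      rw [div_mul_div_comm, div_mul_div_comm, div_le_div_iff₀ (by positivity) (by positivity)]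
      have hkey : ((2:ℝ) ^ (n+1)) ^ 2 * 2 ^ n ≤ 4 * ((2:ℝ) ^ n) ^ d := by
        have h1 : ((2:ℝ) ^ (n+1)) ^ 2 = 4 * ((2:ℝ) ^ n) ^ 2 := by ring
        have h2 : ((2:ℝ) ^ n) ^ 3 ≤ ((2:ℝ) ^ n) ^ d := by
          apply pow_le_pow_right₀ (one_le_pow₀ (by norm_num)) (by omega)
        nlinarith [pow_pos (show (0:ℝ) < 2 by norm_num) n,
          pow_pos (pow_pos (show (0:ℝ) < 2 by norm_num) n) 2]
      nlinarith [mul_le_mul_of_nonneg_right hkey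
        (show (0:ℝ) ≤ r ^ d * r ^ 2 by positivity)]
    calc (∫⁻ ξ in A n, f ξ)
        ≤ (ENNReal.ofReal ((r / 2 ^ (n+1)) ^ 2))⁻¹ * volume (A n) := hstep1
      _ ≤ (ENNReal.ofReal ((r / 2 ^ (n+1)) ^ 2))⁻¹ *
          (ENNReal.ofReal ((r / 2 ^ n) ^ d) * B) := mul_le_mul_right hstep2 _
      _ = ENNReal.ofReal (((r / 2 ^ (n+1)) ^ 2)⁻¹ * (r / 2 ^ n) ^ d) * B := by
          rw [hinv, ← mul_assoc, ← ENNReal.ofReal_mul (by positivity)]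
      _ ≤ ENNReal.ofReal ((4 * r ^ d / r ^ 2) * ((1:ℝ)/2) ^ n) * B :=
          mul_le_mul_left (ENNReal.ofReal_le_ofReal hreal) _
      _ = ENNReal.ofReal (4 * r ^ d / r ^ 2) * B * ENNReal.ofReal ((1:ℝ)/2) ^ n := by
          rw [ENNReal.ofReal_mul (by positivity), ENNReal.ofReal_pow (by norm_num)]
          ring
  calc ∫⁻ ξ in Metric.ball (0 : E) r, f ξ
      ≤ ∫⁻ ξ in (⋃ n, A n) ∪ {0}, f ξ := lintegral_mono_set hsub
    _ ≤ (∫⁻ ξ in (⋃ n, A n), f ξ) + ∫⁻ ξ in ({0} : Set E), f ξ := lintegral_union_le _ _ _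
    _ = ∫⁻ ξ in (⋃ n, A n), f ξ := by
        rw [setLIntegral_measure_zero _ _ (measure_singleton _), add_zero]
    _ ≤ ∑' n, ∫⁻ ξ in A n, f ξ := lintegral_iUnion_le _ _
    _ ≤ ∑' n : ℕ, ENNReal.ofReal (4 * r ^ d / r ^ 2) * B * ENNReal.ofReal ((1:ℝ)/2) ^ n :=
        ENNReal.tsum_le_tsum hbound
    _ = ENNReal.ofReal (4 * r ^ d / r ^ 2) * B * ∑' n : ℕ, ENNReal.ofReal ((1:ℝ)/2) ^ n :=
        ENNReal.tsum_mul_left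
    _ < ∞ := by
        rw [ENNReal.tsum_geometric]
        refine ENNReal.mul_lt_top (ENNReal.mul_lt_top ENNReal.ofReal_lt_top hB) ?_
        rw [lt_top_iff_ne_top, Ne, ENNReal.inv_eq_top, tsub_eq_zero_iff_le]
        exact fun h => absurd (lt_of_lt_of_le (ENNReal.ofReal_lt_one.2 (by norm_num)) h)
          (lt_irrefl _)


lemma exists_eps {l : ℝ≥0∞} (hl : 0 < l) : ∃ ε : ℝ≥0∞, 0 < ε ∧ ε ≠ ⊤ ∧ ε < l := by
  rcases eq_or_ne l ⊤ with h | h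
  · exact ⟨1, one_pos, ENNReal.one_ne_top, by rw [h]; exact ENNReal.one_lt_top⟩
  · exact ⟨l / 2, ENNReal.half_pos hl.ne', ne_top_of_le_ne_top h ENNReal.half_le_self,
      ENNReal.half_lt_self hl.ne' h⟩

end Stmt4Aux

open Stmt4Aux in
/-- in dimension `d ≥ 3`, if the truncated second moments of the symbol are
uniformly nondegenerate near the origin, then the Chung–Fuchs transience condition holds
for all sufficiently small `r > 0`. -/
theorem stmt4 (d : ℕ) (hd : 3 ≤ d)
    (c : EuclideanSpace ℝ (Fin d) → Matrix (Fin d) (Fin d) ℝ)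
    (hc : ∀ x, (c x).PosSemidef)
    (ν : EuclideanSpace ℝ (Fin d) → MeasureTheory.Measure (EuclideanSpace ℝ (Fin d)))
    (hν0 : ∀ x, ν x {0} = 0)
    (hν2 : (⨆ x, ∫⁻ y, ENNReal.ofReal (min 1 (‖y‖ ^ 2)) ∂(ν x)) < ∞)
    (K : ℝ) (hK : ∀ x i j, |c x i j| ≤ K)
    (hmeas : Measurable fun ξ : EuclideanSpace ℝ (Fin d) => ⨅ x, reSymbol d c ν x ξ)
    (hliminf : 0 < Filter.liminf
      (fun ξ : EuclideanSpace ℝ (Fin d) =>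
        (⨆ (t : ℝ) (_ : 0 < t), ⨅ x,
          (ENNReal.ofReal (∑ i, ∑ j, ξ i * c x i j * ξ j) +
            ∫⁻ y in {y : EuclideanSpace ℝ (Fin d) | ‖y‖ ≤ t},
              ENNReal.ofReal ((inner ℝ ξ y : ℝ) ^ 2) ∂(ν x))) /
          ENNReal.ofReal (‖ξ‖ ^ 2))
      (𝓝[≠] (0 : EuclideanSpace ℝ (Fin d)))) :
    ∃ r₀ > (0 : ℝ), ∀ r : ℝ, 0 < r → r < r₀ →
      ∫⁻ ξ in Metric.ball (0 : EuclideanSpace ℝ (Fin d)) r,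
        (⨅ x, reSymbol d c ν x ξ)⁻¹ < ∞ := by
  classical
  have hK0 : 0 ≤ K := le_trans (abs_nonneg _) (hK 0 ⟨0, by omega⟩ ⟨0, by omega⟩)
  obtain ⟨ε, hε0, hεtop, hεl⟩ := exists_eps hliminf
  have hev := eventually_lt_of_lt_liminf hεl
  rw [eventually_nhdsWithin_iff, Metric.eventually_nhds_iff] at hev
  obtain ⟨δ, hδ0, hδ⟩ := hev
  set ρ := δ / 2 with hρdef
  have hρ0 : 0 < ρ := by positivity
  set R := ρ + 1 with hRdef
  set a := ε * ENNReal.ofReal (ρ ^ 2) with hadef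
  have ha_ne : a ≠ ∞ := ENNReal.mul_ne_top hεtop ENNReal.ofReal_ne_top
  set U : ℕ → Set (EuclideanSpace ℝ (Fin d)) := fun n =>
    {ξ | ξ ∈ Metric.ball (0 : EuclideanSpace ℝ (Fin d)) R ∧
      a < ⨅ x, Fq d c ν ((n : ℝ) + 1) x ξ} with hUdef
  have hUopen : ∀ n, IsOpen (U n) := fun n =>
    isOpen_slice c ν hK hK0 hν2
      (by have := Nat.cast_nonneg (α := ℝ) n; linarith) (by positivity) ha_ne
  have hcov : Metric.sphere (0 : EuclideanSpace ℝ (Fin d)) ρ ⊆ ⋃ n, U n := by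
    intro ξ hξ
    have hnorm : ‖ξ‖ = ρ := mem_sphere_zero_iff_norm.1 hξ
    have hne : ξ ≠ 0 := by
      intro h; rw [h, norm_zero] at hnorm; linarith
    have hdist : dist ξ 0 < δ := by rw [dist_zero_right, hnorm]; linarith
    have hG := hδ hdist hne
    rw [hnorm] at hG
    have hG' : ε < (⨆ (t : ℝ) (_ : 0 < t), ⨅ x, Fq d c ν t x ξ) /
        ENNReal.ofReal (ρ ^ 2) := hG
    have hmul : a < ⨆ (t : ℝ) (_ : 0 < t), ⨅ x, Fq d c ν t x ξ := by
      rw [hadef]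
      exact (ENNReal.lt_div_iff_mul_lt
        (Or.inl (ne_of_gt (ENNReal.ofReal_pos.2 (by positivity))))
        (Or.inl ENNReal.ofReal_ne_top)).1 hG'
    rw [lt_iSup_iff] at hmul
    obtain ⟨t, hmul⟩ := hmul
    rw [lt_iSup_iff] at hmul
    obtain ⟨ht0, hmul⟩ := hmul
    refine Set.mem_iUnion.2 ⟨⌈t⌉₊, ?_, ?_⟩
    · rw [mem_ball_zero_iff, hnorm, hRdef]
      linarith
    · refine lt_of_lt_of_le hmul (le_iInf fun x => le_trans (iInf_le _ x)
        (Fq_mono c ν ?_ x ξ))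
      have h1 := Nat.le_ceil t
      have h2 : ((⌈t⌉₊ : ℝ)) ≤ (⌈t⌉₊ : ℝ) + 1 := by linarith
      linarith
  obtain ⟨s, hs⟩ := (isCompact_sphere (0 : EuclideanSpace ℝ (Fin d)) ρ).elim_finite_subcover
    U hUopen hcov
  set N := s.sup id with hNdef
  have hsph : ∀ ξ ∈ Metric.sphere (0 : EuclideanSpace ℝ (Fin d)) ρ,
      a < ⨅ x, Fq d c ν ((N : ℝ) + 1) x ξ := by
    intro ξ hξ
    obtain ⟨n, hn, hmem⟩ := Set.mem_iUnion₂.1 (hs hξ)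
    refine lt_of_lt_of_le hmem.2 (le_iInf fun x => le_trans (iInf_le _ x)
      (Fq_mono c ν ?_ x ξ))
    have h1 : n ≤ N := Finset.le_sup (f := id) hn
    have h2 : (n : ℝ) ≤ (N : ℝ) := Nat.cast_le.2 h1
    linarith
  set r₀ := min ρ (1 / ((N : ℝ) + 1)) with hr₀def
  have hr₀0 : 0 < r₀ := lt_min hρ0 (by positivity)
  have hkey : ∀ ξ : EuclideanSpace ℝ (Fin d), 0 < ‖ξ‖ → ‖ξ‖ < r₀ →
      ε * ENNReal.ofReal (‖ξ‖ ^ 2) / 3 ≤ ⨅ x, reSymbol d c ν x ξ := by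
    intro ξ h0 hlt
    have hξρ : ‖ξ‖ < ρ := lt_of_lt_of_le hlt (min_le_left _ _)
    have hξN : ‖ξ‖ < 1 / ((N : ℝ) + 1) := lt_of_lt_of_le hlt (min_le_right _ _)
    set ξS := (ρ / ‖ξ‖) • ξ with hξSdef
    have hξSnorm : ‖ξS‖ = ρ := by
      rw [hξSdef, norm_smul, Real.norm_eq_abs, abs_of_pos (by positivity)]
      field_simp
    have hS := hsph ξS (mem_sphere_zero_iff_norm.2 hξSnorm)
    have hback : ξ = (‖ξ‖ / ρ) • ξS := by
      rw [hξSdef, smul_smul, show ‖ξ‖ / ρ * (ρ / ‖ξ‖) = 1 by field_simp, one_smul]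
    have h1 : ∀ x, Fq d c ν ((N : ℝ) + 1) x ξ =
        ENNReal.ofReal ((‖ξ‖ / ρ) ^ 2) * Fq d c ν ((N : ℝ) + 1) x ξS := by
      intro x
      conv_lhs => rw [hback]
      exact Fq_smul c ν _ x ξS (by positivity)
    have h2 : (⨅ x, Fq d c ν ((N : ℝ) + 1) x ξ) =
        ENNReal.ofReal ((‖ξ‖ / ρ) ^ 2) * ⨅ x, Fq d c ν ((N : ℝ) + 1) x ξS := by
      rw [iInf_congr h1]
      exact (ENNReal.mul_iInf (fun h => absurd h ENNReal.ofReal_ne_top)).symm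
    have h3 : ε * ENNReal.ofReal (‖ξ‖ ^ 2) < ⨅ x, Fq d c ν ((N : ℝ) + 1) x ξ := by
      rw [h2]
      have hlt2 : ENNReal.ofReal ((‖ξ‖ / ρ) ^ 2) * a <
          ENNReal.ofReal ((‖ξ‖ / ρ) ^ 2) * ⨅ x, Fq d c ν ((N : ℝ) + 1) x ξS :=
        by
          rw [mul_comm _ a, mul_comm _ (⨅ x, Fq d c ν ((N : ℝ) + 1) x ξS)]
          exact ENNReal.mul_lt_mul_left (ne_of_gt (ENNReal.ofReal_pos.2
            (by positivity : (0:ℝ) < (‖ξ‖ / ρ) ^ 2))) ENNReal.ofReal_ne_top hS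
      refine lt_of_le_of_lt (le_of_eq ?_) hlt2
      rw [hadef, mul_left_comm, ← ENNReal.ofReal_mul (by positivity)]
      congr 2
      field_simp
    have h4 : ∀ x, Fq d c ν ((N : ℝ) + 1) x ξ ≤ 3 * reSymbol d c ν x ξ := by
      intro x
      refine Fq_le_three c hc ν x ?_
      rw [lt_div_iff₀ (by positivity)] at hξN
      nlinarith
    have h5 : (⨅ x, Fq d c ν ((N : ℝ) + 1) x ξ) / 3 ≤ ⨅ x, reSymbol d c ν x ξ := by
      refine le_iInf fun x => ?_
      rw [ENNReal.div_le_iff_le_mul (Or.inl (by norm_num)) (Or.inl (by norm_num))]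
      exact le_trans (iInf_le _ x) (le_trans (h4 x) (by rw [mul_comm]))
    exact le_trans (ENNReal.div_le_div_right h3.le 3) h5
  refine ⟨r₀, hr₀0, fun r hr0 hrr₀ => ?_⟩
  haveI := nontrivial_E hd
  have h0ae : ∀ᵐ ξ ∂(volume : Measure (EuclideanSpace ℝ (Fin d))), ξ ≠ 0 := by
    rw [ae_iff]
    have : {ξ : EuclideanSpace ℝ (Fin d) | ¬ξ ≠ 0} = {0} := by
      ext ξ; simp
    rw [this]
    exact measure_singleton _
  have hae : ∀ᵐ ξ ∂(volume.restrict (Metric.ball (0 : EuclideanSpace ℝ (Fin d)) r)),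
      (⨅ x, reSymbol d c ν x ξ)⁻¹ ≤ (3 * ε⁻¹) * (ENNReal.ofReal (‖ξ‖ ^ 2))⁻¹ := by
    filter_upwards [ae_restrict_of_ae h0ae, ae_restrict_mem Metric.isOpen_ball.measurableSet]
      with ξ hξ0 hξb
    have h0' : 0 < ‖ξ‖ := norm_pos_iff.2 hξ0
    have hltr₀ : ‖ξ‖ < r₀ := lt_trans (mem_ball_zero_iff.1 hξb) hrr₀
    have hk := hkey ξ h0' hltr₀
    refine le_trans (ENNReal.inv_le_inv' hk) ?_
    have hne1 : ε * ENNReal.ofReal (‖ξ‖ ^ 2) ≠ ⊤ :=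
      ENNReal.mul_ne_top hεtop ENNReal.ofReal_ne_top
    rw [div_eq_mul_inv, ENNReal.mul_inv (Or.inr (by simp)) (Or.inl hne1),
      ENNReal.mul_inv (Or.inl hε0.ne') (Or.inl hεtop), inv_inv]
    apply le_of_eq
    ring
  calc ∫⁻ ξ in Metric.ball (0 : EuclideanSpace ℝ (Fin d)) r,
        (⨅ x, reSymbol d c ν x ξ)⁻¹
      ≤ ∫⁻ ξ in Metric.ball (0 : EuclideanSpace ℝ (Fin d)) r,
          (3 * ε⁻¹) * (ENNReal.ofReal (‖ξ‖ ^ 2))⁻¹ := lintegral_mono_ae hae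
    _ = (3 * ε⁻¹) * ∫⁻ ξ in Metric.ball (0 : EuclideanSpace ℝ (Fin d)) r,
          (ENNReal.ofReal (‖ξ‖ ^ 2))⁻¹ :=
        lintegral_const_mul' _ _ (ENNReal.mul_ne_top (by simp) (ENNReal.inv_ne_top.2 hε0.ne'))
    _ < ∞ := ENNReal.mul_lt_top
        (ENNReal.mul_lt_top (by simp) (ENNReal.inv_lt_top.2 hε0))
        (lint_inv_sq_lt_top hd hr0)
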